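/- Let K ⊆ ℝ^n be a compact convex set, let ε > 0 be such that ε·n is a positive integer, and for I ⊆ [n] write K(I) = K ∩ {x ∈ ℝ^n : x_i ∈ [−1,1] for all i ∈ I}. Suppose E_{g ~ Unif({−1,1}^n)} [ min_{I ⊆ [n], |I| = ε·n} max_{x ∈ K(I)} ⟨x, g⟩ ] = c·n for some c > 1, and let R = max_{x ∈ K} ‖x‖₂. Then for any function y assigning to each g ∈ {−1,1}^n a maximizer y(g) of x ↦ ⟨x, g⟩ over K([n]), the probability over uniformly random g ∈ {−1,1}^n that |{i ∈ [n] : |y(g)_i| = 1}| ≥ ε·n is at least (c−1)²·n / R². -/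

import Mathlib

open Matrix MeasureTheory ProbabilityTheory
open scoped NNReal Kronecker

/-- The spectral (operator) norm of a real square matrix. -/
noncomputable def specNorm {n : Type*} [Fintype n] [DecidableEq n] (A : Matrix n n ℝ) : ℝ :=
  ‖Matrix.toEuclideanCLM (𝕜 := ℝ) A‖

/-- The Frobenius norm of a real square matrix: `√(Tr(Aᵀ A))`. -/
noncomputable def frobNorm {n : Type*} [Fintype n] (A : Matrix n n ℝ) : ℝ :=
  Real.sqrt ((Aᵀ * A).trace)

/-- The trace inner product `⟨A, B⟩ = Tr(Aᵀ B)` of real square matrices. -/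
noncomputable def mInner {n : Type*} [Fintype n] (A B : Matrix n n ℝ) : ℝ :=
  (Aᵀ * B).trace

/-- The Euclidean (ℓ₂) norm of a vector in `ℝⁿ`. -/
noncomputable def l2norm {n : ℕ} (x : Fin n → ℝ) : ℝ := Real.sqrt (∑ i, (x i) ^ 2)

/-- The sign cube `{-1, 1}ⁿ` as a finite set of vectors in `ℝⁿ`. -/
noncomputable def signs (n : ℕ) : Finset (Fin n → ℝ) :=
  Fintype.piFinset fun _ => ({-1, 1} : Finset ℝ)

/-- The distribution of a `d × D` random matrix with i.i.d. Gaussian entries of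
mean `0` and variance `1/d`. -/
noncomputable def gaussMat (d D : ℕ) : Measure (Fin d → Fin D → ℝ) :=
  Measure.pi fun _ => Measure.pi fun _ => gaussianReal 0 (d : ℝ≥0)⁻¹

/-- The nuclear (trace) norm `Tr √(Mᵀ M)` of a real square matrix. -/
noncomputable def nucNorm {n : Type*} [Fintype n] [DecidableEq n] (M : Matrix n n ℝ) : ℝ :=
  ((Matrix.posSemidef_conjTranspose_mul_self M).1.eigenvectorUnitary.1 *
    Matrix.diagonal (Real.sqrt ∘ (Matrix.posSemidef_conjTranspose_mul_self M).1.eigenvalues) *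
    (star (Matrix.posSemidef_conjTranspose_mul_self M).1.eigenvectorUnitary : Matrix n n ℝ)).trace

/-- The dual norm of a norm `N` on `ℝᵐ`: `‖y‖* = sup {⟨x, y⟩ : N x ≤ 1}`. -/
noncomputable def dualNorm {m : ℕ} (N : (Fin m → ℝ) → ℝ) (y : Fin m → ℝ) : ℝ :=
  sSup ((fun x => x ⬝ᵥ y) '' {x | N x ≤ 1})

/-- The binary entropy function (base 2). -/
noncomputable def binH (p : ℝ) : ℝ := -p * Real.logb 2 p - (1 - p) * Real.logb 2 (1 - p)

set_option maxHeartbeats 1000000 in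
/-- **Width to coloring** (Proposition 4.1).  Let `K ⊆ ℝⁿ` be compact and convex, `ε n = k`
a positive integer, and suppose the expected value over uniform `g ∈ {±1}ⁿ` of
`min_{|I| = εn} max_{x ∈ K(I)} ⟨x, g⟩` equals `c n` with `c > 1`, where
`K(I) = K ∩ {x : xᵢ ∈ [-1,1] ∀ i ∈ I}`.  Let `R = max_{x ∈ K} ‖x‖₂`.  Then for any choice
`y(g)` of maximizer of `⟨·, g⟩` over `K([n])`, with probability at least `(c-1)² n / R²`
over uniform `g`, at least `ε n` coordinates of `y(g)` have absolute value `1`. -/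
theorem width_to_coloring (n k : ℕ) (ε c R : ℝ)
    (hk : 0 < k) (hε : 0 < ε) (hεn : (k : ℝ) = ε * n)
    (K : Set (Fin n → ℝ)) (hKcpt : IsCompact K) (hKconv : Convex ℝ K)
    (hc : 1 < c)
    (hwidth : (∑ g ∈ signs n,
        sInf {r : ℝ | ∃ I : Finset (Fin n), I.card = k ∧
          r = sSup ((fun x => x ⬝ᵥ g) ''
            (K ∩ {x | ∀ i ∈ I, x i ∈ Set.Icc (-1 : ℝ) 1}))}) / 2 ^ n = c * n)
    (hR : IsGreatest (l2norm '' K) R)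
    (y : (Fin n → ℝ) → (Fin n → ℝ))
    (hy : ∀ g ∈ signs n,
      y g ∈ K ∩ {x | ∀ i, x i ∈ Set.Icc (-1 : ℝ) 1} ∧
      ∀ x ∈ K ∩ {x | ∀ i, x i ∈ Set.Icc (-1 : ℝ) 1}, x ⬝ᵥ g ≤ y g ⬝ᵥ g) :
    (c - 1) ^ 2 * n / R ^ 2 ≤
      (Set.ncard {g : Fin n → ℝ | g ∈ signs n ∧
        k ≤ Set.ncard {i : Fin n | |y g i| = 1}} : ℝ) / 2 ^ n := by
  classical
  -- abbreviation for the width functional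
  let W : (Fin n → ℝ) → ℝ := fun g => sInf {r : ℝ | ∃ I : Finset (Fin n), I.card = k ∧
          r = sSup ((fun x => x ⬝ᵥ g) ''
            (K ∩ {x | ∀ i ∈ I, x i ∈ Set.Icc (-1 : ℝ) 1}))}
  have hwidth' : (∑ g ∈ signs n, W g) / 2 ^ n = c * n := hwidth
  have h2n : (0:ℝ) < 2 ^ n := by positivity
  have hn0 : 0 < n := by
    rcases Nat.eq_zero_or_pos n with h | h
    · exfalso; rw [h] at hεn; simp at hεn; omega
    · exact h
  -- k ≤ n
  have hkn : k ≤ n := by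
    by_contra hkn
    push_neg at hkn
    have hempty : ∀ g : Fin n → ℝ, W g = 0 := by
      intro g
      have : {r : ℝ | ∃ I : Finset (Fin n), I.card = k ∧
          r = sSup ((fun x => x ⬝ᵥ g) ''
            (K ∩ {x | ∀ i ∈ I, x i ∈ Set.Icc (-1 : ℝ) 1}))} = ∅ := by
        ext r
        simp only [Set.mem_setOf_eq, Set.mem_empty_iff_false, iff_false, not_exists]
        rintro I ⟨hI, -⟩
        have := I.card_le_univ
        simp [hI] at this
        omega
      simp only [W]
      rw [this, Real.sInf_empty]
    rw [Finset.sum_congr rfl (fun g _ => hempty g), Finset.sum_const, smul_zero,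
      zero_div] at hwidth'
    have hnpos : (0:ℝ) < (n:ℝ) := by exact_mod_cast hn0
    nlinarith
  have hsum : (∑ g ∈ signs n, W g) = c * n * 2 ^ n := by
    field_simp at hwidth'; linarith
  -- basic facts about R and K
  have hR0 : 0 ≤ R := by
    obtain ⟨x₀, -, rfl⟩ := hR.1
    exact Real.sqrt_nonneg _
  have hl2R : ∀ x ∈ K, l2norm x ≤ R := fun x hx => hR.2 ⟨x, hx, rfl⟩
  have habs : ∀ x ∈ K, ∀ i, |x i| ≤ R := by
    intro x hx i
    have h1 : |x i| = Real.sqrt ((x i) ^ 2) := (Real.sqrt_sq_eq_abs _).symm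
    have h2 : (x i) ^ 2 ≤ ∑ j, (x j) ^ 2 :=
      Finset.single_le_sum (f := fun j => (x j) ^ 2) (fun j _ => sq_nonneg _) (Finset.mem_univ i)
    calc |x i| ≤ l2norm x := by rw [h1]; exact Real.sqrt_le_sqrt h2
    _ ≤ R := hl2R x hx
  -- facts about signs
  have hsign : ∀ g ∈ signs n, ∀ i, g i = -1 ∨ g i = 1 := by
    intro g hg i
    have := Fintype.mem_piFinset.mp hg i
    simpa using this
  have hgabs : ∀ g ∈ signs n, ∀ i, |g i| = 1 := by
    intro g hg i
    rcases hsign g hg i with h | h <;> simp [h]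
  set s : ℝ := Real.sqrt n with hs
  have hs2 : s ^ 2 = n := Real.sq_sqrt (Nat.cast_nonneg n)
  have hspos : 0 < s := Real.sqrt_pos.mpr (by exact_mod_cast hn0)
  have hgsq : ∀ g ∈ signs n, ∑ i, (g i) ^ 2 = (n : ℝ) := by
    intro g hg
    have : ∀ i, (g i) ^ 2 = 1 := by
      intro i; rcases hsign g hg i with h | h <;> simp [h]
    simp [this]
  -- Cauchy–Schwarz: |x ⬝ᵥ g| ≤ R * s
  have hdotR : ∀ x ∈ K, ∀ g ∈ signs n, |x ⬝ᵥ g| ≤ R * s := by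
    intro x hx g hg
    have hcs := Finset.sum_mul_sq_le_sq_mul_sq Finset.univ x g
    rw [hgsq g hg] at hcs
    have hl2 : (l2norm x) ^ 2 = ∑ j, (x j) ^ 2 :=
      Real.sq_sqrt (Finset.sum_nonneg fun j _ => sq_nonneg _)
    have hl2n : 0 ≤ l2norm x := Real.sqrt_nonneg _
    have h1 : (x ⬝ᵥ g) ^ 2 ≤ (l2norm x * s) ^ 2 := by
      have : x ⬝ᵥ g = ∑ i, x i * g i := rfl
      rw [this]
      calc (∑ i, x i * g i) ^ 2 ≤ (∑ j, (x j) ^ 2) * n := hcs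
      _ = (l2norm x * s) ^ 2 := by rw [mul_pow, hl2, hs2]
    have h2 : |x ⬝ᵥ g| ≤ l2norm x * s := by
      have h3 := Real.sqrt_le_sqrt h1
      rwa [Real.sqrt_sq_eq_abs, Real.sqrt_sq (by positivity : (0:ℝ) ≤ l2norm x * s)] at h3
    calc |x ⬝ᵥ g| ≤ l2norm x * s := h2
    _ ≤ R * s := by nlinarith [hl2R x hx]
  have hRs0 : 0 ≤ R * s := by positivity
  -- properties of the width set
  have hSub : ∀ g ∈ signs n, ∀ r ∈ {r : ℝ | ∃ I : Finset (Fin n), I.card = k ∧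
          r = sSup ((fun x => x ⬝ᵥ g) ''
            (K ∩ {x | ∀ i ∈ I, x i ∈ Set.Icc (-1 : ℝ) 1}))}, r ≤ R * s := by
    rintro g hg r ⟨I, -, rfl⟩
    refine Real.sSup_le ?_ hRs0
    rintro z ⟨x, ⟨hxK, -⟩, rfl⟩
    exact (le_abs_self _).trans (hdotR x hxK g hg)
  have hSlb : ∀ g ∈ signs n, ∀ r ∈ {r : ℝ | ∃ I : Finset (Fin n), I.card = k ∧
          r = sSup ((fun x => x ⬝ᵥ g) ''
            (K ∩ {x | ∀ i ∈ I, x i ∈ Set.Icc (-1 : ℝ) 1}))}, -(R * s) ≤ r := by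
    rintro g hg r ⟨I, -, rfl⟩
    rcases Set.eq_empty_or_nonempty (K ∩ {x | ∀ i ∈ I, x i ∈ Set.Icc (-1 : ℝ) 1}) with h | h
    · rw [h]; simp [Real.sSup_empty]; linarith
    · obtain ⟨x, hx⟩ := h
      have hbdd : BddAbove ((fun x => x ⬝ᵥ g) '' (K ∩ {x | ∀ i ∈ I, x i ∈ Set.Icc (-1 : ℝ) 1})) := by
        refine ⟨R * s, ?_⟩
        rintro z ⟨x', ⟨hx'K, -⟩, rfl⟩
        exact (le_abs_self _).trans (hdotR x' hx'K g hg)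
      have h1 : x ⬝ᵥ g ≤ sSup _ := le_csSup hbdd ⟨x, hx, rfl⟩
      have h2 : -(R * s) ≤ x ⬝ᵥ g := neg_le_of_abs_le (hdotR x hx.1 g hg)
      linarith
  have hbddW : ∀ g ∈ signs n, BddBelow {r : ℝ | ∃ I : Finset (Fin n), I.card = k ∧
          r = sSup ((fun x => x ⬝ᵥ g) ''
            (K ∩ {x | ∀ i ∈ I, x i ∈ Set.Icc (-1 : ℝ) 1}))} :=
    fun g hg => ⟨-(R * s), hSlb g hg⟩
  obtain ⟨I₀, -, hI₀⟩ := Finset.exists_subset_card_eq (s := (Finset.univ : Finset (Fin n))) (n := k) (by simpa using hkn)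
  have hWRs : ∀ g ∈ signs n, W g ≤ R * s := by
    intro g hg
    have hmem : sSup ((fun x => x ⬝ᵥ g) '' (K ∩ {x | ∀ i ∈ I₀, x i ∈ Set.Icc (-1 : ℝ) 1})) ∈
        {r : ℝ | ∃ I : Finset (Fin n), I.card = k ∧
          r = sSup ((fun x => x ⬝ᵥ g) ''
            (K ∩ {x | ∀ i ∈ I, x i ∈ Set.Icc (-1 : ℝ) 1}))} := ⟨I₀, hI₀, rfl⟩
    exact (csInf_le (hbddW g hg) hmem).trans (hSub g hg _ hmem)
  -- y g ⬝ᵥ g ≤ n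
  have hdotn : ∀ g ∈ signs n, y g ⬝ᵥ g ≤ (n : ℝ) := by
    intro g hg
    have hyIcc := (hy g hg).1.2
    calc y g ⬝ᵥ g = ∑ i, y g i * g i := rfl
    _ ≤ ∑ i : Fin n, (1 : ℝ) := by
        refine Finset.sum_le_sum fun i _ => ?_
        calc y g i * g i ≤ |y g i * g i| := le_abs_self _
        _ = |y g i| * |g i| := abs_mul _ _
        _ = |y g i| := by rw [hgabs g hg i, mul_one]
        _ ≤ 1 := abs_le.mpr (hyIcc i)
    _ = (n : ℝ) := by simp
  -- the key bound: few tight coordinates implies W g ≤ n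
  have hkey : ∀ g ∈ signs n, (Finset.univ.filter fun i => |y g i| = 1).card < k →
      W g ≤ (n : ℝ) := by
    intro g hg hlt
    obtain ⟨I, hTI, -, hIcard⟩ := Finset.exists_subsuperset_card_eq
      (Finset.univ.filter fun i => |y g i| = 1).subset_univ (le_of_lt hlt) (by simpa using hkn)
    have hyK := (hy g hg).1.1
    have hyIcc : ∀ i, |y g i| ≤ 1 := fun i => abs_le.mpr ((hy g hg).1.2 i)
    have claim : ∀ x ∈ K ∩ {x | ∀ i ∈ I, x i ∈ Set.Icc (-1 : ℝ) 1}, x ⬝ᵥ g ≤ y g ⬝ᵥ g := by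
      rintro x ⟨hxK, hxI⟩
      by_contra hgt
      push_neg at hgt
      by_cases hSemp : (Finset.univ \ I : Finset (Fin n)) = ∅
      · have hIall : ∀ i, x i ∈ Set.Icc (-1 : ℝ) 1 := by
          intro i
          exact hxI i (Finset.sdiff_eq_empty_iff_subset.mp hSemp (Finset.mem_univ i))
        exact absurd ((hy g hg).2 x ⟨hxK, hIall⟩) (not_le.mpr hgt)
      · have hSne : (Finset.univ \ I : Finset (Fin n)).Nonempty :=
          Finset.nonempty_iff_ne_empty.mpr hSemp
        set δ : ℝ := (Finset.univ \ I).inf' hSne (fun i => 1 - |y g i|) with hδ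
        have hδpos : 0 < δ := by
          rw [hδ, Finset.lt_inf'_iff]
          intro i hi
          have hiI : i ∉ I := (Finset.mem_sdiff.mp hi).2
          have hiT : i ∉ (Finset.univ.filter fun j => |y g j| = 1) := fun h => hiI (hTI h)
          have hne : |y g i| ≠ 1 := by
            intro h; exact hiT (Finset.mem_filter.mpr ⟨Finset.mem_univ i, h⟩)
          have := lt_of_le_of_ne (hyIcc i) hne
          linarith
        have hδ1 : δ ≤ 1 := by
          obtain ⟨i₀, hi₀⟩ := hSne
          calc δ ≤ 1 - |y g i₀| := Finset.inf'_le _ hi₀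
          _ ≤ 1 := by have := abs_nonneg (y g i₀); linarith
        set t : ℝ := δ / (R + 1) with ht
        have hR1 : (0:ℝ) < R + 1 := by linarith
        have ht0 : 0 < t := div_pos hδpos hR1
        have ht1 : t ≤ 1 := by
          rw [ht, div_le_one hR1]; linarith
        have htR : t * (R + 1) = δ := div_mul_cancel₀ δ (ne_of_gt hR1)
        set z : Fin n → ℝ := (1 - t) • y g + t • x with hz
        have hzi : ∀ i, z i = (1 - t) * y g i + t * x i := by
          intro i; simp [hz]
        have hzK : z ∈ K := hKconv hyK hxK (by linarith) (le_of_lt ht0) (by ring)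
        have hzIcc : ∀ i, z i ∈ Set.Icc (-1 : ℝ) 1 := by
          intro i
          rw [Set.mem_Icc, ← abs_le]
          have habs1 : |z i| ≤ (1 - t) * |y g i| + t * |x i| := by
            rw [hzi i]
            calc |(1 - t) * y g i + t * x i| ≤ |(1 - t) * y g i| + |t * x i| := abs_add_le _ _
            _ = (1 - t) * |y g i| + t * |x i| := by
                rw [abs_mul, abs_mul, abs_of_nonneg (by linarith : (0:ℝ) ≤ 1 - t),
                  abs_of_nonneg (le_of_lt ht0)]
          by_cases hiI : i ∈ I
          · have hx1 : |x i| ≤ 1 := abs_le.mpr (hxI i hiI)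
            have hy1 : |y g i| ≤ 1 := hyIcc i
            nlinarith [abs_nonneg (y g i), abs_nonneg (x i)]
          · have hiS : i ∈ Finset.univ \ I := Finset.mem_sdiff.mpr ⟨Finset.mem_univ i, hiI⟩
            have hδle : δ ≤ 1 - |y g i| := Finset.inf'_le _ hiS
            have hxR : |x i| ≤ R := habs x hxK i
            nlinarith [abs_nonneg (y g i), mul_nonneg (le_of_lt ht0)
              (by linarith [abs_nonneg (y g i)] : (0:ℝ) ≤ |y g i| + 1)]
        have hdot : z ⬝ᵥ g = (1 - t) * (y g ⬝ᵥ g) + t * (x ⬝ᵥ g) := by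
          simp only [dotProduct, Finset.mul_sum]
          rw [← Finset.sum_add_distrib]
          refine Finset.sum_congr rfl fun i _ => ?_
          rw [hzi i]; ring
        have hle := (hy g hg).2 z ⟨hzK, hzIcc⟩
        rw [hdot] at hle
        have heq : (1 - t) * (y g ⬝ᵥ g) + t * (x ⬝ᵥ g)
            = y g ⬝ᵥ g + t * (x ⬝ᵥ g - y g ⬝ᵥ g) := by ring
        rw [heq] at hle
        have h2 := mul_pos ht0 (sub_pos.mpr hgt)
        linarith
    have hmem : sSup ((fun x => x ⬝ᵥ g) '' (K ∩ {x | ∀ i ∈ I, x i ∈ Set.Icc (-1 : ℝ) 1})) ∈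
        {r : ℝ | ∃ I : Finset (Fin n), I.card = k ∧
          r = sSup ((fun x => x ⬝ᵥ g) ''
            (K ∩ {x | ∀ i ∈ I, x i ∈ Set.Icc (-1 : ℝ) 1}))} := ⟨I, hIcard, rfl⟩
    refine (csInf_le (hbddW g hg) hmem).trans ?_
    refine Real.sSup_le ?_ (Nat.cast_nonneg n)
    rintro z ⟨x, hx, rfl⟩
    exact (claim x hx).trans (hdotn g hg)
  -- counting
  set Bf : Finset (Fin n → ℝ) :=
    (signs n).filter (fun g => k ≤ (Finset.univ.filter fun i => |y g i| = 1).card) with hBf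
  have hsetcard : ∀ g, Set.ncard {i : Fin n | |y g i| = 1} =
      (Finset.univ.filter fun i => |y g i| = 1).card := by
    intro g
    rw [show {i : Fin n | |y g i| = 1} = ↑(Finset.univ.filter fun i => |y g i| = 1) by
      ext i; simp]
    exact Set.ncard_coe_finset _
  have hBcard : Set.ncard {g : Fin n → ℝ | g ∈ signs n ∧
      k ≤ Set.ncard {i : Fin n | |y g i| = 1}} = Bf.card := by
    rw [show {g : Fin n → ℝ | g ∈ signs n ∧ k ≤ Set.ncard {i : Fin n | |y g i| = 1}}
        = ↑Bf by ext g; simp [hBf, Finset.mem_filter, hsetcard]]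
    exact Set.ncard_coe_finset _
  have hcards : (signs n).card = 2 ^ n := by
    simp [signs, Fintype.card_piFinset, Finset.card_pair (by norm_num : (-1:ℝ) ≠ 1)]
  -- split the sum
  have hsplit : ∑ g ∈ Bf, W g + ∑ g ∈ (signs n).filter
      (fun g => ¬ k ≤ (Finset.univ.filter fun i => |y g i| = 1).card), W g
      = c * n * 2 ^ n := by
    rw [← hsum, hBf]
    exact Finset.sum_filter_add_sum_filter_not _ _ _
  set m : ℕ := Bf.card with hm
  set m₂ : ℕ := ((signs n).filter
      (fun g => ¬ k ≤ (Finset.univ.filter fun i => |y g i| = 1).card)).card with hm₂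
  have hmm₂ : m + m₂ = 2 ^ n := by
    rw [hm, hm₂, hBf, Finset.card_filter_add_card_filter_not, hcards]
  have hB1 : ∑ g ∈ Bf, W g ≤ (m : ℝ) * (R * s) := by
    have := Finset.sum_le_card_nsmul Bf W (R * s)
      (fun g hg => hWRs g (Finset.mem_filter.mp hg).1)
    rwa [nsmul_eq_mul] at this
  have hB2 : ∑ g ∈ (signs n).filter
      (fun g => ¬ k ≤ (Finset.univ.filter fun i => |y g i| = 1).card), W g
      ≤ (m₂ : ℝ) * n := by
    have := Finset.sum_le_card_nsmul ((signs n).filter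
      (fun g => ¬ k ≤ (Finset.univ.filter fun i => |y g i| = 1).card)) W (n : ℝ)
      (fun g hg => by
        obtain ⟨hg1, hg2⟩ := Finset.mem_filter.mp hg
        exact hkey g hg1 (not_le.mp hg2))
    rwa [nsmul_eq_mul] at this
  -- global bound : c * s ≤ R
  have hglob : c * s ≤ R := by
    have h1 : ∑ g ∈ signs n, W g ≤ ((2:ℝ) ^ n) * (R * s) := by
      have := Finset.sum_le_card_nsmul (signs n) W (R * s) (fun g hg => hWRs g hg)
      rw [nsmul_eq_mul, hcards] at this
      exact_mod_cast this
    rw [hsum] at h1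
    have h2 : c * (n : ℝ) ≤ R * s := by
      have := mul_le_mul_of_nonneg_right (le_refl ((2:ℝ)^n)) hRs0
      nlinarith
    nlinarith [hs2, hspos]
  have hRpos : 0 < R :=
    lt_of_lt_of_le (mul_pos (by linarith : (0:ℝ) < c) hspos) hglob
  -- main inequality
  have hmain : (c - 1) * n * 2 ^ n ≤ (m : ℝ) * (R * s) := by
    have hcast : (m₂ : ℝ) = 2 ^ n - m := by
      have : (m : ℝ) + m₂ = 2 ^ n := by exact_mod_cast hmm₂
      linarith
    have hmn : (0:ℝ) ≤ (m : ℝ) := Nat.cast_nonneg m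
    have hB2' : ∑ g ∈ (signs n).filter
        (fun g => ¬ k ≤ (Finset.univ.filter fun i => |y g i| = 1).card), W g
        ≤ ((2:ℝ) ^ n - m) * n := by
      rw [← hcast]; exact hB2
    have hmn2 : (0:ℝ) ≤ (m : ℝ) * n := mul_nonneg hmn (Nat.cast_nonneg n)
    linarith [hsplit, hB1, hB2']
  -- finish
  rw [hBcard, div_le_div_iff₀ (by positivity) h2n]
  have hcs1 : (c - 1) * s ≤ R := by nlinarith [hglob, hspos]
  have hc1 : (0:ℝ) ≤ c - 1 := by linarith
  have h3 : (c - 1) * s * 2 ^ n ≤ (m : ℝ) * R := by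
    have hmain' : (c - 1) * s ^ 2 * 2 ^ n ≤ (m : ℝ) * (R * s) := by
      rw [hs2]; exact hmain
    nlinarith [hmain', hspos]
  calc (c - 1) ^ 2 * (n : ℝ) * 2 ^ n = ((c - 1) * s) * ((c - 1) * s * 2 ^ n) := by
        rw [← hs2]; ring
  _ ≤ R * ((m : ℝ) * R) := by
      refine mul_le_mul hcs1 h3 ?_ (le_of_lt hRpos)
      positivity
  _ = (m : ℝ) * R ^ 2 := by ring
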